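/- Let D be a smooth DNNF and let (v,u) be a transitive edge of D, i.e., there is a path in D from v to u not using the edge (v,u). Then the DNNF D' obtained from D by removing the edge (v,u) computes the same function as D. -/

import Mathlib

set_option autoImplicit false

universe u v

/-- A literal: a boolean variable together with a polarity. -/
structure Lit (V : Type u) where
  var : V
  pos : Bool

/-- The complementary literal. -/
def Lit.negate {V : Type u} (l : Lit V) : Lit V := ⟨l.var, !l.pos⟩

/-- A literal is satisfied by a total assignment. -/
def Lit.eval {V : Type u} (a : V → Bool) (l : Lit V) : Prop := a l.var = l.pos

/-- A clause is a (finite in all our uses) disjunction of a set of literals. -/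
abbrev Clause (V : Type u) := Set (Lit V)

/-- A CNF formula is a conjunction of a set of clauses. -/
abbrev CNF (V : Type u) := Set (Clause V)

/-- A clause is satisfied iff some of its literals is. -/
def Clause.Sat {V : Type u} (a : V → Bool) (C : Clause V) : Prop := ∃ l ∈ C, Lit.eval a l

/-- A CNF formula is satisfied iff all of its clauses are. -/
def CNF.Sat {V : Type u} (a : V → Bool) (φ : CNF V) : Prop := ∀ C ∈ φ, Clause.Sat a C

def CNF.Satisfiable {V : Type u} (φ : CNF V) : Prop := ∃ a : V → Bool, CNF.Sat a φ

/-- `φ ⊨ l`. -/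
def CNF.Entails {V : Type u} (φ : CNF V) (l : Lit V) : Prop :=
  ∀ a : V → Bool, CNF.Sat a φ → Lit.eval a l

/-- A partial assignment, i.e. a set of literals, is consistent if it contains
no complementary pair of literals. -/
def ConsistentPA {V : Type u} (α : Set (Lit V)) : Prop := ∀ l ∈ α, Lit.negate l ∉ α

/-- The set of unit clauses corresponding to a partial assignment `α`;
`φ ∪ paUnits α` represents `φ ∧ α`. -/
def paUnits {V : Type u} (α : Set (Lit V)) : CNF V := (fun l => ({l} : Clause V)) '' α

/-- Derivability by repeated unit resolution: from a clause `C ∋ l` and the unit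
clause `¬l` derive `C \ {l}`.  `UnitDeriv φ ∅` means `φ ⊢₁ ⊥` and
`UnitDeriv φ {l}` means `φ ⊢₁ l`. -/
inductive UnitDeriv {V : Type u} (φ : CNF V) : Clause V → Prop where
  | base {C : Clause V} : C ∈ φ → UnitDeriv φ C
  | step {C : Clause V} (l : Lit V) : l ∈ C → UnitDeriv φ C →
      UnitDeriv φ {Lit.negate l} → UnitDeriv φ (C \ {l})

/-- The set of variables occurring in a CNF formula. -/
def CNF.vars {V : Type u} (φ : CNF V) : Set V := ⋃ C ∈ φ, Lit.var '' C

/-- All literals of `α` are literals on the variables `W`. -/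
def LitsOn {V : Type u} (α : Set (Lit V)) (W : Set V) : Prop := ∀ l ∈ α, l.var ∈ W

/-- `φ` is unit refutation complete on the variables `W`. -/
def URCon {V : Type u} (φ : CNF V) (W : Set V) : Prop :=
  ∀ α : Set (Lit V), ConsistentPA α → LitsOn α W →
    ¬ CNF.Satisfiable (φ ∪ paUnits α) → UnitDeriv (φ ∪ paUnits α) ∅

/-- `φ` is propagation complete on the variables `W`. -/
def PCon {V : Type u} (φ : CNF V) (W : Set V) : Prop :=
  ∀ α : Set (Lit V), ConsistentPA α → LitsOn α W →
    ∀ l : Lit V, l.var ∈ W → CNF.Entails (φ ∪ paUnits α) l →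
      UnitDeriv (φ ∪ paUnits α) {l} ∨ UnitDeriv (φ ∪ paUnits α) ∅

/-- `φ` is a CNF encoding of the function `f` with input variables `X`
(the remaining variables of `φ` being auxiliary); `f` is assumed to depend
only on the values of the variables in `X`. -/
def IsEncodingOn {V : Type u} (φ : CNF V) (X : Set V) (f : (V → Bool) → Prop) : Prop :=
  ∀ a : V → Bool, f a ↔ ∃ b : V → Bool, (∀ x ∈ X, b x = a x) ∧ CNF.Sat b φ

/-- The positive literal on a variable. -/
def posL {V : Type u} (x : V) : Lit V := ⟨x, true⟩
/-- The negative literal on a variable. -/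
def negL {V : Type u} (x : V) : Lit V := ⟨x, false⟩

/-! ## Smooth DNNFs over variables with finite domains -/

/-- The label of a node of an NNF: an ∧-node, an ∨-node, or a leaf labeled
with the domain variable `⟦x_i = s⟧`. -/
inductive NLabel (n : ℕ) : Type where
  | And : NLabel n
  | Or : NLabel n
  | Leaf : Fin n → ℕ → NLabel n

/-- An NNF: a rooted DAG whose inner nodes are labeled `∧` or `∨` and whose
leaves are labeled with domain variables `⟦x_i = s⟧` (`s ∈ Dom i`) of the
variables `x₁, …, xₙ` with finite domains `Dom i`.  The edge `edge v u` means
that `u` is a child (an input) of `v`.  Well-formedness conditions are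
collected in `NNF.WF`. -/
structure NNF : Type 1 where
  /-- the nodes -/
  N : Type
  /-- `edge v u`: there is an edge from `v` to its child `u` -/
  edge : N → N → Prop
  /-- the root -/
  root : N
  /-- the number of variables -/
  n : ℕ
  /-- the (finite, non-empty) domains of the variables -/
  Dom : Fin n → Set ℕ
  /-- the label of each node -/
  label : N → NLabel n

namespace NNF

/-- Reachability along directed edges. -/
def Reach (D : NNF) (v u : D.N) : Prop := Relation.ReflTransGen D.edge v u

/-- `var(v)`: the set of variables `x_i` such that a leaf labeled with a domain
variable of `x_i` is reachable from `v`. -/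
def varsOf (D : NNF) (v : D.N) : Set (Fin D.n) :=
  {i | ∃ u s, D.Reach v u ∧ D.label u = NLabel.Leaf i s}

/-- `v` is a leaf. -/
def IsLeaf (D : NNF) (v : D.N) : Prop := ∃ i s, D.label v = NLabel.Leaf i s

/-- `H_i`: the set of nodes `v` with `x_i ∈ var(v)`; the subgraph of `D`
induced on `H_i` is `D_i`. -/
def H (D : NNF) (i : Fin D.n) : Set D.N := {v | i ∈ D.varsOf v}

/-- `L_i`: the set of leaves labeled with domain variables of `x_i`. -/
def Lset (D : NNF) (i : Fin D.n) : Set D.N := {v | ∃ s, D.label v = NLabel.Leaf i s}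

/-- Well-formedness of an NNF: the domains are non-empty; the edge relation is
well-founded (the DAG is acyclic); leaves are labeled with domain variables
(`s ∈ Dom i`) and have no outgoing edges; each domain variable labels at most
one leaf; every node is reachable from the root; for each `i` at least one
domain variable of `x_i` labels a leaf; and every node has a leaf below it
(no node represents a constant). -/
def WF (D : NNF) : Prop :=
  (∀ i, (D.Dom i).Nonempty) ∧
  WellFounded (fun u v : D.N => D.edge v u) ∧
  (∀ v i s, D.label v = NLabel.Leaf i s → s ∈ D.Dom i) ∧
  (∀ v i s, D.label v = NLabel.Leaf i s → ∀ u, ¬ D.edge v u) ∧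
  (∀ v w i s, D.label v = NLabel.Leaf i s → D.label w = NLabel.Leaf i s → v = w) ∧
  (∀ v, D.Reach D.root v) ∧
  (∀ i, ∃ v s, D.label v = NLabel.Leaf i s) ∧
  (∀ v, ∃ i, i ∈ D.varsOf v)

/-- Decomposability: the children of every ∧-node have pairwise disjoint sets
of variables. -/
def Decomposable (D : NNF) : Prop :=
  ∀ v, D.label v = NLabel.And →
    ∀ u₁ u₂, D.edge v u₁ → D.edge v u₂ → u₁ ≠ u₂ →
      Disjoint (D.varsOf u₁) (D.varsOf u₂)

/-- Smoothness: every child of an ∨-node `v` has the same variables as `v`. -/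
def Smooth (D : NNF) : Prop :=
  ∀ v u, D.label v = NLabel.Or → D.edge v u → D.varsOf u = D.varsOf v

/-- A node of `D` evaluates to `true` under the assignment `a` of the domain
variables, where the children are taken with respect to the edge relation `E`
(this generality is used when edges are removed from `D`). -/
inductive EvalWith (D : NNF) (E : D.N → D.N → Prop) (a : Fin D.n × ℕ → Bool) : D.N → Prop where
  | leaf {v : D.N} {i : Fin D.n} {s : ℕ} :
      D.label v = NLabel.Leaf i s → a (i, s) = true → EvalWith D E a v
  | and {v : D.N} : D.label v = NLabel.And →
      (∀ u, E v u → EvalWith D E a u) → EvalWith D E a v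
  | or {v u : D.N} : D.label v = NLabel.Or → E v u →
      EvalWith D E a u → EvalWith D E a v

/-- A node of `D` evaluates to `true` under the assignment `a`. -/
def EvalTrue (D : NNF) (a : Fin D.n × ℕ → Bool) (v : D.N) : Prop :=
  D.EvalWith D.edge a v

/-- `f_D(⟦x⟧)`: the monotone boolean function of the domain variables computed
by `D`. -/
def fD (D : NNF) (a : Fin D.n × ℕ → Bool) : Prop := D.EvalTrue a D.root

/-- The direct encoding constraints: for each `i` exactly one domain variable
of `x_i` is true. -/
def DConsistent (D : NNF) (a : Fin D.n × ℕ → Bool) : Prop :=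
  ∀ i, ∃! s, s ∈ D.Dom i ∧ a (i, s) = true

/-- `f_D'(⟦x⟧)`: the conjunction of `f_D` and the direct encoding constraints. -/
def fD' (D : NNF) (a : Fin D.n × ℕ → Bool) : Prop := D.fD a ∧ D.DConsistent a

/-- A subgraph of `D`: a set of nodes together with a set of edges of `D`
between them. -/
structure Subgraph (D : NNF) : Type where
  mem : Set D.N
  tedge : D.N → D.N → Prop
  le_edge : ∀ {v u}, tedge v u → D.edge v u
  mem_left : ∀ {v u}, tedge v u → v ∈ mem
  mem_right : ∀ {v u}, tedge v u → u ∈ mem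

/-- A minimal satisfying subtree of `D`: a rooted subtree (out-arborescence)
of `D` whose root is the root of `D`, which contains all the `D`-edges out of
each of its ∧-nodes and exactly one `D`-edge out of each of its ∨-nodes. -/
def IsMST (D : NNF) (T : D.Subgraph) : Prop :=
  D.root ∈ T.mem ∧
  (∀ v ∈ T.mem, Relation.ReflTransGen T.tedge D.root v) ∧
  (∀ v ∈ T.mem, v ≠ D.root → ∃! u, T.tedge u v) ∧
  (∀ u, ¬ T.tedge u D.root) ∧
  (∀ v ∈ T.mem, D.label v = NLabel.And → ∀ u, D.edge v u → T.tedge v u) ∧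
  (∀ v ∈ T.mem, D.label v = NLabel.Or → ∃! u, T.tedge v u)

/-- `β_T`: the total assignment of the domain variables that sets to `1`
exactly the domain variables labeling the leaves of `T`. -/
noncomputable def beta (D : NNF) (T : D.Subgraph) : Fin D.n × ℕ → Bool :=
  fun p => @decide (∃ v ∈ T.mem, D.label v = NLabel.Leaf p.1 p.2)
    (Classical.propDecidable _)

/-- A root-to-leaf path in `D_i` (the subgraph of `D` induced on `H_i`),
represented by the list of its nodes. -/
def IsRLPath (D : NNF) (i : Fin D.n) (p : List D.N) : Prop :=
  p ≠ [] ∧ (∀ v ∈ p, v ∈ D.H i) ∧ List.Chain' D.edge p ∧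
  p.head? = some D.root ∧ ∃ t, p.getLast? = some t ∧ t ∈ D.Lset i

/-- A separator in `D_i`: a set `S ⊆ H_i` such that every path in `D_i` from
the root to a leaf contains precisely one node of `S`. -/
def IsSeparator (D : NNF) (i : Fin D.n) (S : Set D.N) : Prop :=
  S ⊆ D.H i ∧ ∀ p, D.IsRLPath i p → ∃! w, w ∈ p ∧ w ∈ S

/-- `D` is covered by the collections `𝒮 i` of separators: each `S ∈ 𝒮 i` is a
separator in `D_i` and the union of `𝒮 i` is `H_i ∖ {ρ}`. -/
def CoveredBy (D : NNF) (𝒮 : ∀ _ : Fin D.n, Set (Set D.N)) : Prop :=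
  ∀ i, (∀ S ∈ 𝒮 i, D.IsSeparator i S) ∧ ⋃₀ 𝒮 i = D.H i \ {D.root}

/-- `D` can be covered by separators. -/
def Covered (D : NNF) : Prop := ∃ 𝒮, D.CoveredBy 𝒮

end NNF

/-- Let `D` be a smooth DNNF and `(v,u)` a transitive edge
of `D`, i.e. there is a path in `D` from `v` to `u` not using the edge
`(v,u)`.  Then removing the edge `(v,u)` from `D` does not change the computed
function. -/
theorem stmt10 (D : NNF) (hwf : D.WF) (hdec : D.Decomposable) (hsm : D.Smooth)
    (v u : D.N) (hvu : D.edge v u)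
    (hpath : Relation.TransGen
      (fun p q => D.edge p q ∧ ¬ (p = v ∧ q = u)) v u)
    (a : Fin D.n × ℕ → Bool) :
    D.EvalWith D.edge a D.root ↔
      D.EvalWith (fun p q => D.edge p q ∧ ¬ (p = v ∧ q = u)) a D.root := by
  classical
  obtain ⟨hdom, hacc, hleafdom, hleafnoedge, hleafuniq, hreachroot, hexleaf, hvar⟩ := hwf
  set E' : D.N → D.N → Prop := fun p q => D.edge p q ∧ ¬ (p = v ∧ q = u) with hE'
  have hreach_of : ∀ {p q : D.N}, Relation.ReflTransGen E' p q → D.Reach p q := by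
    intro p q h
    induction h with
    | refl => exact Relation.ReflTransGen.refl
    | tail _ hs ih => exact ih.tail hs.1
  have hvars_mono : ∀ {p q : D.N}, D.Reach p q → D.varsOf q ⊆ D.varsOf p := by
    intro p q h i hi
    obtain ⟨w, s, hw, hs⟩ := hi
    exact ⟨w, s, h.trans hw, hs⟩
  have hvars_edge : ∀ {p q : D.N}, D.edge p q → D.varsOf q ⊆ D.varsOf p :=
    fun h => hvars_mono (Relation.ReflTransGen.single h)
  -- `v` is an ∨-node
  have hvor : D.label v = NLabel.Or := by
    rcases hlab : D.label v with _ | _ | ⟨i, s⟩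
    · exfalso
      obtain ⟨q, hvq, hqu⟩ := Relation.TransGen.head'_iff.mp hpath
      have hqne : q ≠ u := fun h => hvq.2 ⟨rfl, h⟩
      have hdisj := hdec v hlab q u hvq.1 hvu hqne
      have hsub : D.varsOf u ⊆ D.varsOf q := hvars_mono (hreach_of hqu)
      obtain ⟨i, hi⟩ := hvar u
      exact Set.disjoint_left.mp hdisj (hsub hi) hi
    · rfl
    · exact absurd hvu (hleafnoedge v i s hlab u)
  have hvu' : D.varsOf u = D.varsOf v := hsm v u hvor hvu
  -- going up a path towards `u`
  have hup : ∀ w, Relation.ReflTransGen E' w u → D.varsOf w ⊆ D.varsOf u →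
      D.EvalWith E' a u → D.EvalWith E' a w := by
    intro w hwu
    induction hwu using Relation.ReflTransGen.head_induction_on with
    | refl => intro _ h; exact h
    | head hstep hrest ih =>
      rename_i p q
      intro hsub hu
      have hqsub : D.varsOf q ⊆ D.varsOf u := (hvars_edge hstep.1).trans hsub
      have hq := ih hqsub hu
      rcases hlab : D.label p with _ | _ | ⟨i, s⟩
      · -- ∧-node: all children must coincide with `q`
        have hpv : p ≠ v := by
          intro h; rw [h, hvor] at hlab; cases hlab
        refine NNF.EvalWith.and hlab ?_
        intro c hc
        by_cases hcq : c = q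
        · subst hcq; exact hq
        · exfalso
          have hdisj := hdec p hlab c q hc.1 hstep.1 hcq
          have hcsub : D.varsOf c ⊆ D.varsOf q :=
            (hvars_edge hc.1).trans (hsub.trans (hvars_mono (hreach_of hrest)))
          obtain ⟨i, hi⟩ := hvar c
          exact Set.disjoint_left.mp hdisj hi (hcsub hi)
      · exact NNF.EvalWith.or hlab hstep hq
      · exact absurd hstep.1 (hleafnoedge p i s hlab q)
  constructor
  · intro h
    have main : ∀ x, D.EvalWith D.edge a x → D.EvalWith E' a x := by
      intro x hx
      induction hx with
      | leaf hl ha => exact NNF.EvalWith.leaf hl ha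
      | and hl hch ih =>
        exact NNF.EvalWith.and hl (fun c hc => ih c hc.1)
      | or hl hedge hq ih =>
        rename_i x q
        by_cases hxq : x = v ∧ q = u
        · obtain ⟨hx, hqq⟩ := hxq
          rw [hqq] at ih
          rw [hx]
          obtain ⟨w₁, hvw₁, hw₁u⟩ := Relation.TransGen.head'_iff.mp hpath
          have hsub : D.varsOf w₁ ⊆ D.varsOf u := by
            rw [hsm v w₁ hvor hvw₁.1, hvu']
          exact NNF.EvalWith.or hvor hvw₁ (hup w₁ hw₁u hsub ih)
        · exact NNF.EvalWith.or hl ⟨hedge, hxq⟩ ih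
    exact main D.root h
  · intro h
    have main : ∀ x, D.EvalWith E' a x → D.EvalWith D.edge a x := by
      intro x hx
      induction hx with
      | leaf hl ha => exact NNF.EvalWith.leaf hl ha
      | and hl hch ih =>
        rename_i x
        have hxv : x ≠ v := by
          intro hh; rw [hh, hvor] at hl; cases hl
        refine NNF.EvalWith.and hl ?_
        intro c hc
        exact ih c ⟨hc, fun hy => hxv hy.1⟩
      | or hl hedge hq ih =>
        exact NNF.EvalWith.or hl hedge.1 ih
    exact main D.root h
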